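/- For any subset A of ℝ, every open subset of the Hattori space (ℝ, τ_A) is an F_σ set in (ℝ, τ_A); that is, (ℝ, τ_A) is a perfect space. -/

import Mathlib

set_option maxHeartbeats 1000000


open Set

/-- The Hattori topology on ℝ: points of `A` have Euclidean neighborhood base
`(x-ε, x+ε)`, points outside `A` have Sorgenfrey neighborhood base `[x, x+ε)`. -/
def hattori (A : Set ℝ) : TopologicalSpace ℝ where
  IsOpen U := ∀ x ∈ U, ∃ ε > (0 : ℝ),
    (x ∈ A → Ioo (x - ε) (x + ε) ⊆ U) ∧ (x ∉ A → Ico x (x + ε) ⊆ U)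
  isOpen_univ := fun x _ => ⟨1, one_pos, fun _ => subset_univ _, fun _ => subset_univ _⟩
  isOpen_inter := by
    intro U V hU hV x hx
    obtain ⟨ε₁, hε₁, h₁, h₁'⟩ := hU x hx.1
    obtain ⟨ε₂, hε₂, h₂, h₂'⟩ := hV x hx.2
    have l1 := min_le_left ε₁ ε₂
    have l2 := min_le_right ε₁ ε₂
    refine ⟨min ε₁ ε₂, lt_min hε₁ hε₂, fun hA => ?_, fun hA => ?_⟩
    · intro y hy
      exact ⟨h₁ hA ⟨by linarith [hy.1], by linarith [hy.2]⟩,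
             h₂ hA ⟨by linarith [hy.1], by linarith [hy.2]⟩⟩
    · intro y hy
      exact ⟨h₁' hA ⟨hy.1, by linarith [hy.2]⟩, h₂' hA ⟨hy.1, by linarith [hy.2]⟩⟩
  isOpen_sUnion := by
    intro S hS x hx
    obtain ⟨U, hU, hxU⟩ := hx
    obtain ⟨ε, hε, h, h'⟩ := hS U hU x hxU
    exact ⟨ε, hε, fun hA => (h hA).trans (subset_sUnion_of_mem hU),
      fun hA => (h' hA).trans (subset_sUnion_of_mem hU)⟩

/-- The Sorgenfrey (lower limit) topology on ℝ. -/
def sorgenfrey : TopologicalSpace ℝ :=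
  TopologicalSpace.generateFrom {S | ∃ a b : ℝ, S = Ico a b}

lemma euclOpen_hattoriOpen (A : Set ℝ) {U : Set ℝ} (h : IsOpen U) :
    @IsOpen ℝ (hattori A) U := by
  intro x hx
  obtain ⟨ε, hε, hball⟩ := Metric.isOpen_iff.1 h x hx
  rw [Real.ball_eq_Ioo] at hball
  exact ⟨ε, hε, fun _ => hball, fun _ => fun y hy => hball ⟨by linarith [hy.1], hy.2⟩⟩

lemma euclClosed_hattoriClosed (A : Set ℝ) {C : Set ℝ} (h : IsClosed C) :
    @IsClosed ℝ (hattori A) C :=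
  @IsClosed.mk ℝ (hattori A) C (euclOpen_hattoriOpen A h.isOpen_compl)

lemma euclOpen_fsigma {V : Set ℝ} (hVopen : IsOpen V) :
    ∃ F : ℕ → Set ℝ, (∀ n, IsClosed (F n)) ∧ V = ⋃ n, F n := by
  classical
  let E := Denumerable.eqv (ℚ × ℚ)
  refine ⟨fun n => if Icc ((E.symm n).1 : ℝ) ((E.symm n).2 : ℝ) ⊆ V
      then Icc ((E.symm n).1 : ℝ) ((E.symm n).2 : ℝ) else ∅, fun n => ?_, ?_⟩
  · dsimp only
    split
    · exact isClosed_Icc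
    · exact isClosed_empty
  · apply Subset.antisymm
    · intro x hx
      obtain ⟨δ, hδ, hball⟩ := Metric.isOpen_iff.1 hVopen x hx
      rw [Real.ball_eq_Ioo] at hball
      obtain ⟨p, hp1, hp2⟩ := exists_rat_btwn (show x - δ < x by linarith)
      obtain ⟨r, hr1, hr2⟩ := exists_rat_btwn (show x < x + δ by linarith)
      have hsub' : Icc ((p : ℝ)) ((r : ℝ)) ⊆ V := fun z hz =>
        hball ⟨lt_of_lt_of_le hp1 hz.1, lt_of_le_of_lt hz.2 hr2⟩
      refine mem_iUnion.2 ⟨E (p, r), ?_⟩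
      simp only [Equiv.symm_apply_apply]
      rw [if_pos hsub']
      exact ⟨le_of_lt hp2, le_of_lt hr1⟩
    · refine iUnion_subset fun n => ?_
      split
      · assumption
      · exact empty_subset _

theorem stmt17 (A : Set ℝ) (U : Set ℝ) (hU : @IsOpen ℝ (hattori A) U) :
    ∃ F : ℕ → Set ℝ, (∀ n, @IsClosed ℝ (hattori A) (F n)) ∧ U = ⋃ n, F n := by
  classical
  -- every point of U has a right half-open neighborhood inside U
  have key : ∀ x ∈ U, ∃ e > (0:ℝ), Ico x (x + e) ⊆ U := by
    intro x hx
    obtain ⟨e, he, h1, h2⟩ := hU x hx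
    by_cases hA : x ∈ A
    · exact ⟨e, he, fun y hy => h1 hA ⟨by linarith [hy.1], hy.2⟩⟩
    · exact ⟨e, he, h2 hA⟩
  choose! ε hε hsub using key
  set V : Set ℝ := ⋃ x ∈ U, Ioo x (x + ε x) with hV
  have hVU : V ⊆ U := by
    intro y hy
    simp only [hV, mem_iUnion, exists_prop] at hy
    obtain ⟨x, hx, hy⟩ := hy
    exact hsub x hx ⟨le_of_lt hy.1, hy.2⟩
  have hVopen : IsOpen V := isOpen_biUnion fun x _ => isOpen_Ioo
  set D : Set ℝ := U \ V with hD
  -- D is countable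
  have hq : ∀ x ∈ U, ∃ r : ℚ, (r : ℝ) ∈ Ioo x (x + ε x) := fun x hx =>
    exists_rat_btwn (by linarith [hε x hx])
  choose! q hq using hq
  have hDc : D.Countable := by
    rw [Set.countable_iff_exists_injOn]
    refine ⟨fun x => Encodable.encode (q x), fun x hx y hy hxy => ?_⟩
    have hxy' : q x = q y := Encodable.encode_injective hxy
    by_contra hne
    wlog hlt : x < y generalizing x y
    · exact this y hy x hx hxy.symm hxy'.symm (Ne.symm hne)
        (lt_of_le_of_ne (not_lt.1 hlt) (Ne.symm hne))
    have hxU : x ∈ U := hx.1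
    have hyU : y ∈ U := hy.1
    have hyV : y ∉ V := hy.2
    have hynotIoo : y ∉ Ioo x (x + ε x) := fun h => hyV (by
      simp only [hV, mem_iUnion, exists_prop]; exact ⟨x, hxU, h⟩)
    have hyge : x + ε x ≤ y := by
      by_contra h
      exact hynotIoo ⟨hlt, not_le.1 h⟩
    have h1 := hq x hxU
    have h2 := hq y hyU
    rw [hxy'] at h1
    have : (q y : ℝ) < x + ε x := h1.2
    linarith [h2.1]
  -- F_σ representation of V
  obtain ⟨F, hFclosed0, hVF⟩ := euclOpen_fsigma hVopen
  have hFclosed : ∀ n, @IsClosed ℝ (hattori A) (F n) :=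
    fun n => euclClosed_hattoriClosed A (hFclosed0 n)
  -- F_σ representation of D
  obtain ⟨G, hGclosed, hGD⟩ : ∃ G : ℕ → Set ℝ,
      (∀ n, @IsClosed ℝ (hattori A) (G n)) ∧ D = ⋃ n, G n := by
    rcases D.eq_empty_or_nonempty with h | h
    · exact ⟨fun _ => ∅, fun _ => euclClosed_hattoriClosed A isClosed_empty, by simp [h]⟩
    · obtain ⟨f, hf⟩ := hDc.exists_eq_range h
      refine ⟨fun n => {f n}, fun n => euclClosed_hattoriClosed A isClosed_singleton, ?_⟩
      rw [hf]
      ext z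
      simp [eq_comm]
  -- combine
  refine ⟨fun n => if Even n then F (n / 2) else G (n / 2), fun n => ?_, ?_⟩
  · by_cases h : Even n <;> simp [h, hFclosed, hGclosed]
  · have hUVD : U = V ∪ D := (union_diff_cancel hVU).symm
    rw [hUVD, hVF, hGD]
    ext x
    simp only [mem_union, mem_iUnion]
    constructor
    · rintro (⟨n, hn⟩ | ⟨n, hn⟩)
      · exact ⟨2 * n, by simp [Nat.even_iff, Nat.mul_div_cancel_left, hn, Nat.mul_mod_right]⟩
      · refine ⟨2 * n + 1, ?_⟩
        have h1 : ¬ Even (2 * n + 1) := by simp [Nat.even_iff, Nat.add_mod, Nat.mul_mod_right]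
        have h2 : (2 * n + 1) / 2 = n := by omega
        simp [h1, h2, hn]
    · rintro ⟨n, hn⟩
      by_cases h : Even n
      · exact Or.inl ⟨n / 2, by simpa [h] using hn⟩
      · exact Or.inr ⟨n / 2, by simpa [h] using hn⟩
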